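/- Fiedler's identity: the (n+1)×(n+1) block matrix [[0, u^T],[u, Ω]] is invertible with inverse -(1/2)·[[4 var_ω(p), -2p^T],[-2p, Q]], where p is the unique vector satisfying Ωp = 2 var_ω(p) u and u^T p = 1. -/

import Mathlib

open Finset Matrix

/-- Fiedler's identity: the `(n+1)×(n+1)` block matrix `[[0, uᵀ],[u, Ω]]` is invertible with
inverse `-(1/2)·[[4 var_ω(p), -2pᵀ],[-2p, Q]]`, where `p` is the unique vector satisfying
`Ωp = 2 var_ω(p) u` and `uᵀp = 1`. Here `Q` is the Laplacian of a connected weighted graph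
(positive semidefinite, kernel spanned by the all-ones vector), `Qd` its Moore–Penrose
pseudoinverse, `ζ = diag Qd` and `Ω = uζᵀ + ζuᵀ - 2Qd` the effective resistance matrix. -/
theorem fiedler_identity {n : ℕ} (Q Qd : Matrix (Fin n) (Fin n) ℝ)
    (hQ : Q.PosSemidef)
    (hker : ∀ x : Fin n → ℝ, Q *ᵥ x = 0 ↔ ∃ c : ℝ, x = fun _ => c)
    (h1 : Q * Qd * Q = Q) (h2 : Qd * Q * Qd = Qd)
    (h3 : (Q * Qd)ᵀ = Q * Qd) (h4 : (Qd * Q)ᵀ = Qd * Q)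
    (ζ : Fin n → ℝ) (hζ : ∀ i, ζ i = Qd i i)
    (Ω : Matrix (Fin n) (Fin n) ℝ)
    (hΩ : ∀ i j, Ω i j = ζ i + ζ j - 2 * Qd i j)
    (p : Fin n → ℝ) (v : ℝ) (hv : v = (1 / 2) * (p ⬝ᵥ Ω *ᵥ p))
    (hp : Ω *ᵥ p = fun _ => 2 * v) (hpsum : ∑ i, p i = 1)
    (M M' : Matrix (Unit ⊕ Fin n) (Unit ⊕ Fin n) ℝ)
    (hM : M = Matrix.fromBlocks (0 : Matrix Unit Unit ℝ)
      (Matrix.of fun _ _ => (1 : ℝ)) (Matrix.of fun _ _ => (1 : ℝ)) Ω)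
    (hM' : M' = (-(1 / 2) : ℝ) • Matrix.fromBlocks
      (Matrix.of fun _ _ => 4 * v)
      (Matrix.of fun (_ : Unit) j => -2 * p j)
      (Matrix.of fun i (_ : Unit) => -2 * p i) Q) :
    M * M' = 1 ∧ M' * M = 1 := by
  classical
  have hn : (n:ℝ) ≠ 0 := by
    intro h
    have hn0 : n = 0 := by exact_mod_cast h
    subst hn0
    simpa using hpsum
  -- symmetry of Q
  have hQsym : Qᵀ = Q := by
    have h := hQ.1
    rw [Matrix.IsHermitian] at h
    ext i j
    have := congrFun (congrFun h i) j
    simpa using this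
  -- symmetry of Qd (uniqueness of the pseudoinverse)
  have hQB : Q * Qdᵀ = Qd * Q := by
    calc Q * Qdᵀ = (Qd * Qᵀ)ᵀ := by rw [Matrix.transpose_mul, Matrix.transpose_transpose]
    _ = (Qd * Q)ᵀ := by rw [hQsym]
    _ = Qd * Q := h4
  have hBQ : Qdᵀ * Q = Q * Qd := by
    calc Qdᵀ * Q = (Qᵀ * Qd)ᵀ := by rw [Matrix.transpose_mul, Matrix.transpose_transpose]
    _ = (Q * Qd)ᵀ := by rw [hQsym]
    _ = Q * Qd := h3
  have hB1 : Q * Qdᵀ * Q = Q := by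
    have e : (Q * Qdᵀ * Q)ᵀ = Q := by
      rw [Matrix.transpose_mul, Matrix.transpose_mul, Matrix.transpose_transpose, hQsym,
        ← Matrix.mul_assoc, h1]
    have := congrArg Matrix.transpose e
    rwa [Matrix.transpose_transpose, hQsym] at this
  have hB2 : Qdᵀ * Q * Qdᵀ = Qdᵀ := by
    calc Qdᵀ * Q * Qdᵀ = (Qd * Qᵀ * Qd)ᵀ := by
          rw [Matrix.transpose_mul, Matrix.transpose_mul, Matrix.transpose_transpose,
            Matrix.mul_assoc]
    _ = (Qd * Q * Qd)ᵀ := by rw [hQsym]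
    _ = Qdᵀ := by rw [h2]
  have e1 : Q * Qd = (Q * Qdᵀ) * (Q * Qd) := by
    conv_lhs => rw [← hB1]
    rw [Matrix.mul_assoc]
  have step1 : Q * Qd = Q * Qdᵀ := by
    calc Q * Qd = (Q * Qd)ᵀ := h3.symm
    _ = ((Q * Qdᵀ) * (Q * Qd))ᵀ := by rw [← e1]
    _ = (Q * Qd)ᵀ * (Q * Qdᵀ)ᵀ := Matrix.transpose_mul _ _
    _ = (Q * Qd) * (Qd * Q) := by
          rw [h3, Matrix.transpose_mul, Matrix.transpose_transpose, hQsym]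
    _ = (Q * Qd) * (Q * Qdᵀ) := by rw [← hQB]
    _ = (Q * Qd * Q) * Qdᵀ := by rw [Matrix.mul_assoc (Q * Qd) Q Qdᵀ]
    _ = Q * Qdᵀ := by rw [h1]
  have e2 : Qd * Q = (Qd * Q) * (Qdᵀ * Q) := by
    conv_lhs => rw [← hB1]
    rw [← Matrix.mul_assoc, ← Matrix.mul_assoc, Matrix.mul_assoc]
  have step2 : Qd * Q = Qdᵀ * Q := by
    calc Qd * Q = (Qd * Q)ᵀ := h4.symm
    _ = ((Qd * Q) * (Qdᵀ * Q))ᵀ := by rw [← e2]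
    _ = (Qdᵀ * Q)ᵀ * (Qd * Q)ᵀ := Matrix.transpose_mul _ _
    _ = (Qᵀ * Qd) * (Qd * Q) := by
          rw [h4, Matrix.transpose_mul, Matrix.transpose_transpose]
    _ = (Qdᵀ * Q) * (Qd * Q) := by rw [hQsym, ← hBQ]
    _ = Qdᵀ * (Q * Qd * Q) := by rw [Matrix.mul_assoc, Matrix.mul_assoc]
    _ = Qdᵀ * Q := by rw [h1]
  have hQdsym : Qdᵀ = Qd := by
    calc Qdᵀ = Qdᵀ * Q * Qdᵀ := hB2.symm
    _ = Qdᵀ * (Q * Qdᵀ) := by rw [Matrix.mul_assoc]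
    _ = Qdᵀ * (Q * Qd) := by rw [← step1]
    _ = (Qdᵀ * Q) * Qd := by rw [Matrix.mul_assoc]
    _ = (Qd * Q) * Qd := by rw [← step2]
    _ = Qd := h2
  have hQQd : Q * Qd = Qd * Q := by
    calc Q * Qd = Q * Qdᵀ := by rw [hQdsym]
    _ = Qd * Q := hQB
  have hQdE : ∀ i j, Qd i j = Qd j i := by
    intro i j
    have := congrFun (congrFun hQdsym j) i
    simpa [Matrix.transpose_apply] using this
  -- all-ones vector facts
  have hQu : Q *ᵥ (fun _ => (1:ℝ)) = 0 := (hker _).mpr ⟨1, rfl⟩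
  have hQrow : ∀ i, ∑ j, Q i j = 0 := by
    intro i
    have h := congrFun hQu i
    simpa [Matrix.mulVec, dotProduct] using h
  have hQcol : ∀ j, ∑ i, Q i j = 0 := by
    intro j
    calc ∑ i, Q i j = ∑ i, Q j i := by
          refine Finset.sum_congr rfl fun i _ => ?_
          have := congrFun (congrFun hQsym j) i
          simpa [Matrix.transpose_apply] using this
    _ = 0 := hQrow j
  have hQdu : Qd *ᵥ (fun _ => (1:ℝ)) = 0 := by
    have hA : (Q * Qd) *ᵥ (fun _ => (1:ℝ)) = 0 := by
      rw [hQQd, ← Matrix.mulVec_mulVec, hQu, Matrix.mulVec_zero]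
    calc Qd *ᵥ (fun _ => (1:ℝ)) = (Qd * (Q * Qd)) *ᵥ (fun _ => (1:ℝ)) := by
          rw [← Matrix.mul_assoc, h2]
    _ = Qd *ᵥ ((Q * Qd) *ᵥ (fun _ => (1:ℝ))) := (Matrix.mulVec_mulVec _ _ _).symm
    _ = 0 := by rw [hA, Matrix.mulVec_zero]
  have hQdrow : ∀ i, ∑ j, Qd i j = 0 := by
    intro i
    have h := congrFun hQdu i
    simpa [Matrix.mulVec, dotProduct] using h
  -- entries of Qd * Q
  have hQdQ_apply : ∀ i j, (Qd * Q) i j = (if i = j then (1:ℝ) else 0) - 1/n := by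
    have hkerP : Q * (1 - Qd * Q) = 0 := by
      rw [Matrix.mul_sub, Matrix.mul_one, ← Matrix.mul_assoc, h1, sub_self]
    have hcol : ∀ j : Fin n, ∃ c : ℝ, ∀ i, (1 - Qd * Q) i j = c := by
      intro j
      obtain ⟨c, hc⟩ := (hker ((1 - Qd * Q) *ᵥ Pi.single j 1)).mp (by
        rw [Matrix.mulVec_mulVec, hkerP, Matrix.zero_mulVec])
      refine ⟨c, fun i => ?_⟩
      have h := congrFun hc i
      rw [Matrix.mulVec_single_one] at h
      simpa using h
    choose c hc using hcol
    have hPsym : ∀ i j, (1 - Qd * Q : Matrix (Fin n) (Fin n) ℝ) i j = (1 - Qd * Q) j i := by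
      intro i j
      have hT : (1 - Qd * Q : Matrix (Fin n) (Fin n) ℝ)ᵀ = 1 - Qd * Q := by
        rw [Matrix.transpose_sub, Matrix.transpose_one, h4]
      have h := congrFun (congrFun hT i) j
      simpa [Matrix.transpose_apply] using h.symm
    have hcc : ∀ i j : Fin n, c j = c i := by
      intro i j
      rw [← hc j i, hPsym i j, hc i j]
    have hProw : ∀ i, ∑ j, (1 - Qd * Q : Matrix (Fin n) (Fin n) ℝ) i j = 1 := by
      intro i
      have h0 : ((1 - Qd * Q) *ᵥ (fun _ => (1:ℝ))) i = 1 := by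
        rw [Matrix.sub_mulVec, ← Matrix.mulVec_mulVec, hQu, Matrix.mulVec_zero]
        simp
      simpa [Matrix.mulVec, dotProduct] using h0
    have hcval : ∀ i, c i = 1/n := by
      intro i
      have h0 : (n:ℝ) * c i = 1 := by
        calc (n:ℝ) * c i = ∑ _j : Fin n, c i := by simp [mul_comm]
        _ = ∑ j, (1 - Qd * Q : Matrix (Fin n) (Fin n) ℝ) i j := by
              refine Finset.sum_congr rfl fun j _ => ?_
              rw [hc j i, hcc i j]
        _ = 1 := hProw i
      field_simp
      linarith
    intro i j
    have h := hc j i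
    rw [hcc i j, hcval i] at h
    have hone : (1 : Matrix (Fin n) (Fin n) ℝ) i j = if i = j then 1 else 0 := Matrix.one_apply
    rw [Matrix.sub_apply, hone] at h
    linarith
  have hQQd_apply : ∀ i j, (Q * Qd) i j = (if i = j then (1:ℝ) else 0) - 1/n := by
    intro i j
    rw [hQQd]; exact hQdQ_apply i j
  -- mulVec formula for Ω
  have hΩmul : ∀ (x : Fin n → ℝ) (i : Fin n), (Ω *ᵥ x) i
      = ζ i * (∑ j, x j) + (∑ j, ζ j * x j) - 2 * (Qd *ᵥ x) i := by
    intro x i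
    simp only [Matrix.mulVec, dotProduct]
    calc ∑ j, Ω i j * x j
        = ∑ j, (ζ i * x j + ζ j * x j - 2 * (Qd i j * x j)) := by
          refine Finset.sum_congr rfl fun j _ => ?_
          rw [hΩ i j]; ring
      _ = (∑ j, ζ i * x j) + (∑ j, ζ j * x j) - ∑ j, 2 * (Qd i j * x j) := by
          rw [Finset.sum_sub_distrib, Finset.sum_add_distrib]
      _ = ζ i * (∑ j, x j) + (∑ j, ζ j * x j) - 2 * ∑ j, Qd i j * x j := by
          rw [← Finset.mul_sum, ← Finset.mul_sum]
  -- the canonical vector q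
  set q : Fin n → ℝ := fun i => 1/2 * (Q *ᵥ ζ) i + 1/n with hq
  have hqsum : ∑ i, q i = 1 := by
    have hs : ∑ i, (Q *ᵥ ζ) i = 0 := by
      simp only [Matrix.mulVec, dotProduct]
      rw [Finset.sum_comm]
      calc ∑ j, ∑ i, Q i j * ζ j = ∑ j : Fin n, (0:ℝ) := by
            refine Finset.sum_congr rfl fun j _ => ?_
            rw [← Finset.sum_mul, hQcol j, zero_mul]
      _ = 0 := by simp
    rw [hq]
    rw [Finset.sum_add_distrib, ← Finset.mul_sum, hs, mul_zero, zero_add]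
    simp
    field_simp
  have hQdq : ∀ i, (Qd *ᵥ q) i = 1/2 * ζ i - (∑ j, ζ j)/(2*n) := by
    intro i
    have e0 : (Qd *ᵥ q) i = 1/2 * (Qd *ᵥ (Q *ᵥ ζ)) i + (1/n) * ∑ j, Qd i j := by
      simp only [Matrix.mulVec, dotProduct, hq]
      rw [Finset.mul_sum, Finset.mul_sum]
      rw [← Finset.sum_add_distrib]
      refine Finset.sum_congr rfl fun j _ => ?_
      ring
    rw [e0, hQdrow i, Matrix.mulVec_mulVec]
    have e1 : ((Qd * Q) *ᵥ ζ) i = ζ i - (∑ j, ζ j)/n := by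
      simp only [Matrix.mulVec, dotProduct]
      calc ∑ j, (Qd * Q) i j * ζ j
          = ∑ j, ((if i = j then (1:ℝ) else 0) * ζ j - 1/n * ζ j) := by
            refine Finset.sum_congr rfl fun j _ => ?_
            rw [hQdQ_apply i j]; ring
        _ = (∑ j, (if i = j then (1:ℝ) else 0) * ζ j) - ∑ j, 1/n * ζ j := by
            rw [Finset.sum_sub_distrib]
        _ = ζ i - (∑ j, ζ j)/n := by
            rw [← Finset.mul_sum]
            congr 1
            · simp
            · field_simp
    rw [e1]
    field_simp
    ring
  have hΩq : ∀ i, (Ω *ᵥ q) i = (∑ j, ζ j * q j) + (∑ j, ζ j)/n := by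
    intro i
    rw [hΩmul q i, hqsum, hQdq i]
    field_simp
    ring
  -- uniqueness: p = q
  have hpq : ∀ i, p i = q i := by
    have hdsum : ∑ i, (p i - q i) = 0 := by
      rw [Finset.sum_sub_distrib, hpsum, hqsum, sub_self]
    have hΩd : ∀ i, (Ω *ᵥ (p - q)) i = 2*v - ((∑ j, ζ j * q j) + (∑ j, ζ j)/n) := by
      intro i
      rw [Matrix.mulVec_sub]
      have := congrFun hp i
      simp only [Pi.sub_apply, this, hΩq i]
    have hquad : ∑ i, (p i - q i) * (Ω *ᵥ (p - q)) i = 0 := by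
      calc ∑ i, (p i - q i) * (Ω *ᵥ (p - q)) i
          = ∑ i, (p i - q i) * (2*v - ((∑ j, ζ j * q j) + (∑ j, ζ j)/n)) := by
            refine Finset.sum_congr rfl fun i _ => by rw [hΩd i]
        _ = (∑ i, (p i - q i)) * (2*v - ((∑ j, ζ j * q j) + (∑ j, ζ j)/n)) := by
            rw [Finset.sum_mul]
        _ = 0 := by rw [hdsum, zero_mul]
    have hdQdd : ∑ i, (p i - q i) * (Qd *ᵥ (p - q)) i = 0 := by
      have expand : ∑ i, (p i - q i) * (Ω *ᵥ (p - q)) i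
          = (∑ i, (p i - q i) * ζ i) * (∑ j, (p j - q j))
            + (∑ i, (p i - q i)) * (∑ j, ζ j * ((p - q) j))
            - 2 * ∑ i, (p i - q i) * (Qd *ᵥ (p - q)) i := by
        calc ∑ i, (p i - q i) * (Ω *ᵥ (p - q)) i
            = ∑ i, ((p i - q i) * ζ i * (∑ j, (p j - q j))
                + (p i - q i) * (∑ j, ζ j * ((p - q) j))
                - 2 * ((p i - q i) * (Qd *ᵥ (p - q)) i)) := by
              refine Finset.sum_congr rfl fun i _ => ?_
              rw [hΩmul (p - q) i]
              have hsj : (∑ j, (p - q) j) = ∑ j, (p j - q j) := by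
                refine Finset.sum_congr rfl fun j _ => rfl
              rw [hsj]
              ring
          _ = (∑ i, (p i - q i) * ζ i * (∑ j, (p j - q j)))
                + (∑ i, (p i - q i) * (∑ j, ζ j * ((p - q) j)))
                - ∑ i, 2 * ((p i - q i) * (Qd *ᵥ (p - q)) i) := by
              rw [Finset.sum_sub_distrib, Finset.sum_add_distrib]
          _ = _ := by
              rw [← Finset.sum_mul, ← Finset.sum_mul, ← Finset.mul_sum]
      rw [hquad, hdsum] at expand
      have : 0 = -(2 * ∑ i, (p i - q i) * (Qd *ᵥ (p - q)) i) := by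
        rw [expand]; ring
      linarith
    -- PSD argument
    have hy0 : Q *ᵥ (Qd *ᵥ (p - q)) = 0 := by
      have hdot : star (Qd *ᵥ (p - q)) ⬝ᵥ Q *ᵥ (Qd *ᵥ (p - q)) = 0 := by
        have hstar : star (Qd *ᵥ (p - q)) = Qd *ᵥ (p - q) := by
          ext i; simp
        rw [hstar]
        have hyv : Qd *ᵥ (p - q) = (p - q) ᵥ* Qd := by
          rw [← Matrix.mulVec_transpose, hQdsym]
        calc (Qd *ᵥ (p - q)) ⬝ᵥ Q *ᵥ (Qd *ᵥ (p - q))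
            = ((p - q) ᵥ* Qd) ⬝ᵥ Q *ᵥ (Qd *ᵥ (p - q)) := by rw [hyv]
          _ = (p - q) ⬝ᵥ Qd *ᵥ (Q *ᵥ (Qd *ᵥ (p - q))) :=
              (dotProduct_mulVec (p - q) Qd _).symm
          _ = (p - q) ⬝ᵥ ((Qd * Q * Qd) *ᵥ (p - q)) := by
              rw [Matrix.mulVec_mulVec, Matrix.mulVec_mulVec]
          _ = (p - q) ⬝ᵥ (Qd *ᵥ (p - q)) := by rw [h2]
          _ = 0 := by
              simp only [dotProduct, Pi.sub_apply]
              exact hdQdd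
      exact (hQ.dotProduct_mulVec_zero_iff _).mp hdot
    intro i
    have h0 : ((Qd * Q) *ᵥ (p - q)) i = 0 := by
      rw [← hQQd, ← Matrix.mulVec_mulVec, hy0]
      rfl
    have e1 : ((Qd * Q) *ᵥ (p - q)) i = (p i - q i) - (∑ j, (p j - q j))/n := by
      simp only [Matrix.mulVec, dotProduct, Pi.sub_apply]
      calc ∑ j, (Qd * Q) i j * (p j - q j)
          = ∑ j, ((if i = j then (1:ℝ) else 0) * (p j - q j) - 1/n * (p j - q j)) := by
            refine Finset.sum_congr rfl fun j _ => ?_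
            rw [hQdQ_apply i j]; ring
        _ = (∑ j, (if i = j then (1:ℝ) else 0) * (p j - q j)) - ∑ j, 1/n * (p j - q j) := by
            rw [Finset.sum_sub_distrib]
        _ = (p i - q i) - (∑ j, (p j - q j))/n := by
            rw [← Finset.mul_sum]
            congr 1
            · simp
            · field_simp
    rw [e1, hdsum] at h0
    have : p i - q i = 0 := by
      field_simp at h0
      exact mul_right_cancel₀ hn (by linarith)
    linarith
  -- the key formula for Q *ᵥ ζ
  have hQζ : ∀ j, (Q *ᵥ ζ) j = 2 * p j - 2/n := by
    intro j
    have := hpq j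
    rw [hq] at this
    field_simp at this ⊢
    linarith
  -- Ω is symmetric entrywise
  have hΩE : ∀ i j, Ω i j = Ω j i := by
    intro i j
    rw [hΩ i j, hΩ j i, hQdE i j]
    ring
  -- row/column product formulas
  have hΩQ : ∀ i j, ∑ k, Ω i k * Q k j = 2 * p j - 2 * (if i = j then (1:ℝ) else 0) := by
    intro i j
    calc ∑ k, Ω i k * Q k j
        = ∑ k, (ζ i * Q k j + ζ k * Q k j - 2 * (Qd i k * Q k j)) := by
          refine Finset.sum_congr rfl fun k _ => ?_
          rw [hΩ i k]; ring
      _ = ζ i * (∑ k, Q k j) + (∑ k, ζ k * Q k j) - 2 * ∑ k, Qd i k * Q k j := by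
          rw [Finset.sum_sub_distrib, Finset.sum_add_distrib, ← Finset.mul_sum, ← Finset.mul_sum]
      _ = 2 * p j - 2 * (if i = j then (1:ℝ) else 0) := by
          have hA : (∑ k, Q k j) = 0 := hQcol j
          have hB : (∑ k, ζ k * Q k j) = (Q *ᵥ ζ) j := by
            simp only [Matrix.mulVec, dotProduct]
            refine Finset.sum_congr rfl fun k _ => ?_
            have hqe : Q j k = Q k j := by
              have := congrFun (congrFun hQsym j) k
              simpa [Matrix.transpose_apply] using this.symm
            rw [hqe]; ring
          have hC : (∑ k, Qd i k * Q k j) = (Qd * Q) i j := (Matrix.mul_apply).symm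
          rw [hA, hB, hC, hQζ j, hQdQ_apply i j]
          ring
  have hQΩ : ∀ i j, ∑ k, Q i k * Ω k j = 2 * p i - 2 * (if i = j then (1:ℝ) else 0) := by
    intro i j
    calc ∑ k, Q i k * Ω k j
        = ∑ k, (Q i k * ζ k + ζ j * Q i k - 2 * (Q i k * Qd k j)) := by
          refine Finset.sum_congr rfl fun k _ => ?_
          rw [hΩ k j]; ring
      _ = (∑ k, Q i k * ζ k) + ζ j * (∑ k, Q i k) - 2 * ∑ k, Q i k * Qd k j := by
          rw [Finset.sum_sub_distrib, Finset.sum_add_distrib, ← Finset.mul_sum, ← Finset.mul_sum]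
      _ = 2 * p i - 2 * (if i = j then (1:ℝ) else 0) := by
          have hA : (∑ k, Q i k) = 0 := hQrow i
          have hB : (∑ k, Q i k * ζ k) = (Q *ᵥ ζ) i := by
            simp only [Matrix.mulVec, dotProduct]
          have hC : (∑ k, Q i k * Qd k j) = (Q * Qd) i j := (Matrix.mul_apply).symm
          rw [hA, hB, hC, hQζ i, hQQd_apply i j]
          ring
  -- the eigen-equation for p in summed form
  have hΩp : ∀ i, ∑ j, Ω i j * p j = 2 * v := by
    intro i
    have := congrFun hp i
    simpa [Matrix.mulVec, dotProduct] using this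
  have hpΩ : ∀ j, ∑ i, p i * Ω i j = 2 * v := by
    intro j
    calc ∑ i, p i * Ω i j = ∑ i, Ω j i * p i := by
          refine Finset.sum_congr rfl fun i _ => ?_
          rw [hΩE i j]; ring
    _ = 2 * v := hΩp j
  -- final computation
  constructor
  · ext a b
    rcases a with a | i <;> rcases b with b | j <;>
      simp only [hM, hM', Matrix.mul_apply, Fintype.sum_sum_type, Matrix.smul_apply,
        Matrix.fromBlocks_apply₁₁, Matrix.fromBlocks_apply₁₂, Matrix.fromBlocks_apply₂₁,
        Matrix.fromBlocks_apply₂₂, Matrix.of_apply, Matrix.zero_apply, smul_eq_mul]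
    · -- (inl, inl)
      have : ∑ x : Fin n, (1:ℝ) * (-(1/2) * (-2 * p x)) = ∑ x, p x := by
        refine Finset.sum_congr rfl fun x _ => by ring
      simp only [Finset.univ_unique, Finset.sum_singleton, zero_mul, this, hpsum]
      norm_num [Matrix.one_apply]
    · -- (inl, inr j)
      have : ∑ x : Fin n, (1:ℝ) * (-(1/2) * Q x j) = -(1/2) * ∑ x, Q x j := by
        rw [Finset.mul_sum]
        refine Finset.sum_congr rfl fun x _ => by ring
      simp only [Finset.univ_unique, Finset.sum_singleton, zero_mul, this, hQcol j]
      simp [Matrix.one_apply] <;> ring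
    · -- (inr i, inl)
      have e : ∑ x : Fin n, Ω i x * (-(1/2) * (-2 * p x)) = ∑ x, Ω i x * p x := by
        refine Finset.sum_congr rfl fun x _ => by ring
      simp only [Finset.univ_unique, Finset.sum_singleton, e, hΩp i]
      simp [Matrix.one_apply] <;> ring
    · -- (inr i, inr j)
      have e : ∑ x : Fin n, Ω i x * (-(1/2) * Q x j) = -(1/2) * ∑ x, Ω i x * Q x j := by
        rw [Finset.mul_sum]
        refine Finset.sum_congr rfl fun x _ => by ring
      simp only [Finset.univ_unique, Finset.sum_singleton, e, hΩQ i j]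
      rw [Matrix.one_apply]
      by_cases hij : i = j <;> simp [hij] <;> ring
  · ext a b
    rcases a with a | i <;> rcases b with b | j <;>
      simp only [hM, hM', Matrix.mul_apply, Fintype.sum_sum_type, Matrix.smul_apply,
        Matrix.fromBlocks_apply₁₁, Matrix.fromBlocks_apply₁₂, Matrix.fromBlocks_apply₂₁,
        Matrix.fromBlocks_apply₂₂, Matrix.of_apply, Matrix.zero_apply, smul_eq_mul]
    · -- (inl, inl)
      have e : ∑ x : Fin n, (-(1/2) * (-2 * p x)) * (1:ℝ) = ∑ x, p x := by
        refine Finset.sum_congr rfl fun x _ => by ring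
      simp only [Finset.univ_unique, Finset.sum_singleton, mul_zero, e, hpsum]
      norm_num [Matrix.one_apply]
    · -- (inl, inr j)
      have e : ∑ x : Fin n, (-(1/2) * (-2 * p x)) * Ω x j = ∑ x, p x * Ω x j := by
        refine Finset.sum_congr rfl fun x _ => by ring
      simp only [Finset.univ_unique, Finset.sum_singleton, e, hpΩ j]
      simp [Matrix.one_apply] <;> ring
    · -- (inr i, inl)
      have e : ∑ x : Fin n, (-(1/2) * Q i x) * (1:ℝ) = -(1/2) * ∑ x, Q i x := by
        rw [Finset.mul_sum]
        refine Finset.sum_congr rfl fun x _ => by ring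
      simp only [Finset.univ_unique, Finset.sum_singleton, mul_zero, e, hQrow i]
      simp [Matrix.one_apply] <;> ring
    · -- (inr i, inr j)
      have e : ∑ x : Fin n, (-(1/2) * Q i x) * Ω x j = -(1/2) * ∑ x, Q i x * Ω x j := by
        rw [Finset.mul_sum]
        refine Finset.sum_congr rfl fun x _ => by ring
      simp only [Finset.univ_unique, Finset.sum_singleton, e, hQΩ i j]
      rw [Matrix.one_apply]
      by_cases hij : i = j <;> simp [hij] <;> ring
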